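/- Let α, α̂ : ℕ → ℝ be sequences with α_n > 0 and α̂_n > 0 for all n, each converging to a nonzero limit. If α_n · α_{n+1} = α̂_n · α̂_{n+1} for all n (that is, the Aluthge transforms of the corresponding weighted shifts coincide), then α_n = α̂_n for all n. In other words, the Aluthge transform is injective on the class of weighted shifts whose weights approach a nonzero limit. -/

import Mathlib

theorem stmt10 (α α' : ℕ → ℝ) (hα : ∀ n, 0 < α n) (hα' : ∀ n, 0 < α' n)
    (L L' : ℝ) (hL : L ≠ 0) (hL' : L' ≠ 0)
    (hlim : Filter.Tendsto α Filter.atTop (nhds L))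
    (hlim' : Filter.Tendsto α' Filter.atTop (nhds L'))
    (heq : ∀ n, α n * α (n + 1) = α' n * α' (n + 1)) :
    ∀ n, α n = α' n := by
  set c : ℝ := α 0 / α' 0 with hc
  have hc0 : 0 < c := div_pos (hα 0) (hα' 0)
  -- alternating relation
  have key : ∀ n, α (2 * n) = c * α' (2 * n) ∧ α (2 * n + 1) = c⁻¹ * α' (2 * n + 1) := by
    intro n
    induction n with
    | zero =>
      constructor
      · simp [hc, div_mul_cancel₀ _ (ne_of_gt (hα' 0))]
      · have h := heq 0
        have : α 1 = c⁻¹ * α' 1 := by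
          have h1 : α 0 * α 1 = α' 0 * α' 1 := heq 0
          field_simp [hc, ne_of_gt (hα 0), ne_of_gt (hα' 0)]
          rw [hc, mul_div_assoc', div_eq_iff (ne_of_gt (hα' 0))]
          linear_combination h1
        simpa using this
    | succ k ih =>
      obtain ⟨ih1, ih2⟩ := ih
      have h1 := heq (2 * k + 1)
      have e1 : α (2 * (k + 1)) = c * α' (2 * (k + 1)) := by
        have hn : (2 * k + 1 + 1) = 2 * (k + 1) := by ring
        rw [hn] at h1
        have hne : α (2 * k + 1) ≠ 0 := ne_of_gt (hα _)
        rw [ih2] at h1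
        have hc' : c⁻¹ ≠ 0 := inv_ne_zero (ne_of_gt hc0)
        have hα'ne : α' (2 * k + 1) ≠ 0 := ne_of_gt (hα' _)
        field_simp at h1
        nlinarith [hα' (2*k+1), hc0, mul_pos hc0 hc0]
      refine ⟨e1, ?_⟩
      have h2 := heq (2 * (k + 1))
      rw [e1] at h2
      have hα'ne : α' (2 * (k + 1)) ≠ 0 := ne_of_gt (hα' _)
      field_simp [ne_of_gt hc0] at h2 ⊢
      nlinarith [hα' (2*(k+1)), hc0]
  -- limits along even and odd indices
  have heven : Filter.Tendsto (fun n => α (2 * n)) Filter.atTop (nhds L) :=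
    hlim.comp (Filter.tendsto_atTop.2 fun b => Filter.eventually_atTop.2 ⟨b, fun n hn => by omega⟩)
  have hodd : Filter.Tendsto (fun n => α (2 * n + 1)) Filter.atTop (nhds L) :=
    hlim.comp (Filter.tendsto_atTop.2 fun b => Filter.eventually_atTop.2 ⟨b, fun n hn => by omega⟩)
  have heven' : Filter.Tendsto (fun n => α' (2 * n)) Filter.atTop (nhds L') :=
    hlim'.comp (Filter.tendsto_atTop.2 fun b => Filter.eventually_atTop.2 ⟨b, fun n hn => by omega⟩)
  have hodd' : Filter.Tendsto (fun n => α' (2 * n + 1)) Filter.atTop (nhds L') :=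
    hlim'.comp (Filter.tendsto_atTop.2 fun b => Filter.eventually_atTop.2 ⟨b, fun n hn => by omega⟩)
  have heven2 : Filter.Tendsto (fun n => α (2 * n)) Filter.atTop (nhds (c * L')) := by
    have := heven'.const_mul c
    refine this.congr fun n => (key n).1.symm
  have hodd2 : Filter.Tendsto (fun n => α (2 * n + 1)) Filter.atTop (nhds (c⁻¹ * L')) := by
    have := hodd'.const_mul c⁻¹
    refine this.congr fun n => (key n).2.symm
  have hL1 : L = c * L' := tendsto_nhds_unique heven heven2
  have hL2 : L = c⁻¹ * L' := tendsto_nhds_unique hodd hodd2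
  have hcc : c = c⁻¹ := by
    have : c * L' = c⁻¹ * L' := hL1 ▸ hL2
    exact mul_right_cancel₀ hL' this
  have hc1 : c = 1 := by
    have h2 : c * c = 1 := by
      field_simp at hcc
      nlinarith
    nlinarith
  have h0 : α 0 = α' 0 := by
    have := hc1
    rw [hc, div_eq_one_iff_eq (ne_of_gt (hα' 0))] at this
    exact this
  intro n
  induction n with
  | zero => exact h0
  | succ k ih =>
    have h := heq k
    rw [ih] at h
    exact mul_left_cancel₀ (ne_of_gt (hα' k)) h
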